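/- For every n ≥ 1 and all n×n complex matrices Z, W with ‖Z‖ < 1 and ‖W‖ < 1 (operator norm), the matrix 2I − Z − W is invertible and the NC parallel sum 𝔓(Z,W) := (I − Z)(2I − Z − W)⁻¹(I − W) is a contraction: ‖(I − Z)(2I − Z − W)⁻¹(I − W)‖ ≤ 1. -/

import Mathlib

set_option maxHeartbeats 1000000
set_option synthInstance.maxHeartbeats 400000

open scoped InnerProductSpace

/-- The ℓ²→ℓ² operator norm of a square complex matrix. -/
noncomputable def opNorm {m : Type*} [Fintype m] [DecidableEq m] (M : Matrix m m ℂ) : ℝ :=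
  ‖Matrix.toEuclideanCLM (𝕜 := ℂ) M‖

/-- Half-accretivity of `1 - T` for a contraction `T`. -/
lemma half_accretive_aux {E : Type*} [NormedAddCommGroup E] [InnerProductSpace ℂ E]
    (T : E →L[ℂ] E) (hT : ‖T‖ ≤ 1) (u : E) :
    ‖(1 - T) u‖ ^ 2 ≤ 2 * RCLike.re ⟪(1 - T) u, u⟫_ℂ := by
  have h1 : (1 - T) u = u - T u := by
    simp [ContinuousLinearMap.sub_apply]
  have h2 : ‖u - T u‖ ^ 2 = ‖u‖ ^ 2 - 2 * RCLike.re ⟪u, T u⟫_ℂ + ‖T u‖ ^ 2 :=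
    norm_sub_sq u (T u)
  have h3 : ⟪u - T u, u⟫_ℂ = ⟪u, u⟫_ℂ - ⟪T u, u⟫_ℂ := inner_sub_left u (T u) u
  have h4 : RCLike.re ⟪u, u⟫_ℂ = ‖u‖ ^ 2 := inner_self_eq_norm_sq u
  have h5 : RCLike.re ⟪u, T u⟫_ℂ = RCLike.re ⟪T u, u⟫_ℂ := inner_re_symm u (T u)
  have h6 : ‖T u‖ ≤ ‖u‖ := by
    calc ‖T u‖ ≤ ‖T‖ * ‖u‖ := T.le_opNorm u
    _ ≤ 1 * ‖u‖ := by nlinarith [norm_nonneg u]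
    _ = ‖u‖ := one_mul _
  rw [h1, h2, h3]
  simp only [map_sub, h4]
  nlinarith [norm_nonneg u, norm_nonneg (T u)]

/-- **Contractivity of the NC parallel sum.** For strict contractions `Z, W`,
the matrix `2I − Z − W` is invertible and
`𝔓(Z,W) = (I − Z)(2I − Z − W)⁻¹(I − W)` is a contraction. -/
theorem nc_parallel_sum_contractive (n : ℕ) (hn : 1 ≤ n)
    (Z W : Matrix (Fin n) (Fin n) ℂ) (hZ : opNorm Z < 1) (hW : opNorm W < 1) :
    IsUnit (2 - Z - W) ∧
    opNorm ((1 - Z) * (2 - Z - W)⁻¹ * (1 - W)) ≤ 1 := by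
  set e := Matrix.toEuclideanCLM (𝕜 := ℂ) (n := Fin n)
  set T := e Z with hTdef
  set S := e W with hSdef
  have hT : ‖T‖ < 1 := hZ
  have hS : ‖S‖ < 1 := hW
  -- the units 1 - T and 1 - S
  set uT : (EuclideanSpace ℂ (Fin n) →L[ℂ] EuclideanSpace ℂ (Fin n))ˣ := Units.oneSub T hT
    with huTdef
  set uS : (EuclideanSpace ℂ (Fin n) →L[ℂ] EuclideanSpace ℂ (Fin n))ˣ := Units.oneSub S hS
    with huSdef
  have huT : (uT : EuclideanSpace ℂ (Fin n) →L[ℂ] EuclideanSpace ℂ (Fin n)) = 1 - T := rfl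
  have huS : (uS : EuclideanSpace ℂ (Fin n) →L[ℂ] EuclideanSpace ℂ (Fin n)) = 1 - S := rfl
  -- invertibility of 2 - T - S
  have hsum : ‖(2⁻¹ : ℂ) • (T + S)‖ < 1 := by
    have h0 : ‖(2⁻¹ : ℂ) • (T + S)‖ = ‖(2⁻¹ : ℂ)‖ * ‖T + S‖ :=
      norm_smul (β := EuclideanSpace ℂ (Fin n) →L[ℂ] EuclideanSpace ℂ (Fin n)) (2⁻¹ : ℂ) (T + S)
    have h1 : ‖T + S‖ ≤ ‖T‖ + ‖S‖ := norm_add_le T S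
    have h2 : ‖(2⁻¹ : ℂ)‖ = 2⁻¹ := by norm_num
    rw [h0, h2]
    nlinarith [norm_nonneg (T + S)]
  have h2one : ((2 : ℂ) • (1 : EuclideanSpace ℂ (Fin n) →L[ℂ] EuclideanSpace ℂ (Fin n)))
      = 2 := by
    rw [← Algebra.algebraMap_eq_smul_one]
    exact map_ofNat _ 2
  have h2TS : (2 : EuclideanSpace ℂ (Fin n) →L[ℂ] EuclideanSpace ℂ (Fin n)) - T - S
      = ((2 : ℂ) • (1 : EuclideanSpace ℂ (Fin n) →L[ℂ] EuclideanSpace ℂ (Fin n)))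
        * (1 - (2⁻¹ : ℂ) • (T + S)) := by
    rw [smul_mul_assoc, one_mul, ← h2one]
    module
  have hU2 : IsUnit ((2 : EuclideanSpace ℂ (Fin n) →L[ℂ] EuclideanSpace ℂ (Fin n)) - T - S) := by
    rw [h2TS]
    refine IsUnit.mul ?_ (Units.oneSub _ hsum).isUnit
    rw [← Algebra.algebraMap_eq_smul_one]
    exact (isUnit_iff_ne_zero.mpr two_ne_zero).map (algebraMap ℂ _)
  have hmap2 : e (2 - Z - W) = 2 - T - S := by simp [hTdef, hSdef, map_sub, map_ofNat]
  have hUm : IsUnit (2 - Z - W) := by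
    have h := hU2.map e.symm
    rw [← hmap2] at h
    simpa using h
  refine ⟨hUm, ?_⟩
  -- matrix inverse facts transported
  have hdet : IsUnit (2 - Z - W).det := (Matrix.isUnit_iff_isUnit_det _).mp hUm
  have hBl : (2 - Z - W) * (2 - Z - W)⁻¹ = 1 := Matrix.mul_nonsing_inv _ hdet
  set B := e ((2 - Z - W)⁻¹) with hBdef
  have heBl : (2 - T - S) * B = 1 := by
    rw [← hmap2, hBdef, ← map_mul, hBl, map_one]
  -- the operator R
  set R : EuclideanSpace ℂ (Fin n) →L[ℂ] EuclideanSpace ℂ (Fin n)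
    := (1 - T) * B * (1 - S) with hRdef
  have hmapR : e ((1 - Z) * (2 - Z - W)⁻¹ * (1 - W)) = R := by
    rw [hRdef, hTdef, hSdef, hBdef, map_mul, map_mul, map_sub, map_sub, map_one]
  -- D * R = 1 where D = uT⁻¹ + uS⁻¹
  set D : EuclideanSpace ℂ (Fin n) →L[ℂ] EuclideanSpace ℂ (Fin n)
    := (↑uT⁻¹ : EuclideanSpace ℂ (Fin n) →L[ℂ] EuclideanSpace ℂ (Fin n))
      + (↑uS⁻¹ : EuclideanSpace ℂ (Fin n) →L[ℂ] EuclideanSpace ℂ (Fin n)) with hDdef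
  have e1 : (↑uT⁻¹ : EuclideanSpace ℂ (Fin n) →L[ℂ] EuclideanSpace ℂ (Fin n)) * (1 - T) = 1 := by
    rw [← huT]; exact uT.inv_mul
  have e2 : (↑uS⁻¹ : EuclideanSpace ℂ (Fin n) →L[ℂ] EuclideanSpace ℂ (Fin n)) * (1 - S) = 1 := by
    rw [← huS]; exact uS.inv_mul
  have hDR : D * R = 1 := by
    have h2 : ((1 : EuclideanSpace ℂ (Fin n) →L[ℂ] EuclideanSpace ℂ (Fin n)) - S) + (1 - T)
        = 2 - T - S := by
      rw [sub_add_sub_comm, one_add_one_eq_two, add_comm S T, sub_sub]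
    have key : D * (1 - T)
        = (↑uS⁻¹ : EuclideanSpace ℂ (Fin n) →L[ℂ] EuclideanSpace ℂ (Fin n)) * (2 - T - S) := by
      calc D * (1 - T)
          = (↑uT⁻¹ : EuclideanSpace ℂ (Fin n) →L[ℂ] EuclideanSpace ℂ (Fin n)) * (1 - T)
            + (↑uS⁻¹ : EuclideanSpace ℂ (Fin n) →L[ℂ] EuclideanSpace ℂ (Fin n)) * (1 - T) := by
            rw [hDdef, add_mul]
      _ = (↑uS⁻¹ : EuclideanSpace ℂ (Fin n) →L[ℂ] EuclideanSpace ℂ (Fin n)) * (1 - S)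
            + (↑uS⁻¹ : EuclideanSpace ℂ (Fin n) →L[ℂ] EuclideanSpace ℂ (Fin n)) * (1 - T) := by
            rw [e1, e2]
      _ = (↑uS⁻¹ : EuclideanSpace ℂ (Fin n) →L[ℂ] EuclideanSpace ℂ (Fin n))
            * ((1 - S) + (1 - T)) := by rw [mul_add]
      _ = (↑uS⁻¹ : EuclideanSpace ℂ (Fin n) →L[ℂ] EuclideanSpace ℂ (Fin n)) * (2 - T - S) := by
            rw [h2]
    calc D * R = D * (1 - T) * B * (1 - S) := by rw [hRdef]; noncomm_ring
    _ = (↑uS⁻¹ : EuclideanSpace ℂ (Fin n) →L[ℂ] EuclideanSpace ℂ (Fin n))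
        * (2 - T - S) * B * (1 - S) := by rw [key]
    _ = (↑uS⁻¹ : EuclideanSpace ℂ (Fin n) →L[ℂ] EuclideanSpace ℂ (Fin n))
        * ((2 - T - S) * B) * (1 - S) := by simp only [mul_assoc]
    _ = (↑uS⁻¹ : EuclideanSpace ℂ (Fin n) →L[ℂ] EuclideanSpace ℂ (Fin n)) * (1 - S) := by
        rw [heBl, mul_one]
    _ = 1 := e2
  -- accretivity of u⁻¹ : for all y, ‖y‖² ≤ 2 re ⟪y, u⁻¹ y⟫
  have accr : ∀ (u : (EuclideanSpace ℂ (Fin n) →L[ℂ] EuclideanSpace ℂ (Fin n))ˣ)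
      (V : EuclideanSpace ℂ (Fin n) →L[ℂ] EuclideanSpace ℂ (Fin n)),
      (↑u : EuclideanSpace ℂ (Fin n) →L[ℂ] EuclideanSpace ℂ (Fin n)) = 1 - V → ‖V‖ < 1 →
      ∀ y, ‖y‖ ^ 2 ≤ 2 * RCLike.re
        ⟪y, (↑u⁻¹ : EuclideanSpace ℂ (Fin n) →L[ℂ] EuclideanSpace ℂ (Fin n)) y⟫_ℂ := by
    intro u V huV hV y
    set w := (↑u⁻¹ : EuclideanSpace ℂ (Fin n) →L[ℂ] EuclideanSpace ℂ (Fin n)) y with hw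
    have hy : (1 - V) w = y := by
      rw [← huV, hw, ← ContinuousLinearMap.mul_apply, Units.mul_inv,
        ContinuousLinearMap.one_apply]
    have h := half_accretive_aux V (le_of_lt hV) w
    rw [hy] at h
    exact h
  -- pointwise contractivity of R
  have hptw : ∀ x, ‖R x‖ ≤ ‖x‖ := by
    intro x
    have hx : D (R x) = x := by
      rw [← ContinuousLinearMap.mul_apply, hDR, ContinuousLinearMap.one_apply]
    have h1 := accr uT T huT hT (R x)
    have h2 := accr uS S huS hS (R x)
    have hDx : ⟪R x, x⟫_ℂ = ⟪R x, D (R x)⟫_ℂ := by rw [hx]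
    have hadd : RCLike.re ⟪R x, x⟫_ℂ
        = RCLike.re ⟪R x, (↑uT⁻¹ : EuclideanSpace ℂ (Fin n) →L[ℂ] EuclideanSpace ℂ (Fin n))
            (R x)⟫_ℂ
          + RCLike.re ⟪R x, (↑uS⁻¹ : EuclideanSpace ℂ (Fin n) →L[ℂ] EuclideanSpace ℂ (Fin n))
            (R x)⟫_ℂ := by
      rw [hDx, hDdef, ContinuousLinearMap.add_apply, inner_add_right, map_add]
    have hcs : RCLike.re ⟪R x, x⟫_ℂ ≤ ‖R x‖ * ‖x‖ := re_inner_le_norm (R x) x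
    nlinarith [norm_nonneg (R x), norm_nonneg x]
  -- conclude
  show ‖e ((1 - Z) * (2 - Z - W)⁻¹ * (1 - W))‖ ≤ 1
  rw [hmapR]
  refine ContinuousLinearMap.opNorm_le_bound R zero_le_one (fun x => ?_)
  rw [one_mul]
  exact hptw x
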